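/- arXiv:0710.3957 — 5 statements merged into one kernel-verified Lean document; each statement's English description precedes it below -/
import Mathlib

section
/- Let ℓ > 0, let g : ℝ → ℝ be ℓ-periodic and Lebesgue integrable on [0,ℓ], and let F : ℝ → ℝ be an ℓ-periodic function satisfying F(b) − F(a) = ∫_a^b g(t) dt for all real a ≤ b. Then for any points p₁, …, p_N ∈ ℝ (N ≥ 1), with G(x) = −(1/N) ∑_{n=1}^N Ψ_ℓ(p_n − x), one has (1/N) ∑_{n=1}^N F(p_n) − (1/ℓ) ∫_0^ℓ F(x) dx = ∫_0^ℓ g(x) G(x) dx. -/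
/-- The `ℓ`-periodic first Bernoulli function `Ψ_ℓ(x) = {x/ℓ} - 1/2`. -/
noncomputable def psiPer (ℓ x : ℝ) : ℝ := Int.fract (x / ℓ) - 1 / 2

open MeasureTheory Set intervalIntegral

lemma fubini_triangle (ℓ : ℝ) (hℓ : 0 < ℓ) (g : ℝ → ℝ)
    (hg_int : IntervalIntegrable g volume 0 ℓ) :
    ∫ x in (0:ℝ)..ℓ, g x * x = ∫ t in (0:ℝ)..ℓ, (∫ x in t..ℓ, g x) := by
  set μ : Measure ℝ := volume.restrict (Ioc (0:ℝ) ℓ) with hμ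
  have hgon : IntegrableOn g (Ioc (0:ℝ) ℓ) volume :=
    (intervalIntegrable_iff_integrableOn_Ioc_of_le hℓ.le).mp hg_int
  have hfin : IsFiniteMeasure μ := by
    constructor
    rw [hμ, Measure.restrict_apply_univ]
    exact measure_Ioc_lt_top
  set f : ℝ → ℝ → ℝ := fun x t => {q : ℝ × ℝ | q.2 < q.1}.indicator (fun q => g q.1) (x, t)
    with hf
  have hfeq : ∀ x t, f x t = if t < x then g x else 0 := by
    intro x t
    by_cases h : t < x <;> simp [hf, Set.indicator_apply, h]
  have hsm1 : AEStronglyMeasurable (fun q : ℝ × ℝ => g q.1) (μ.prod μ) := by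
    have h1 : AEStronglyMeasurable g (Measure.map Prod.fst (μ.prod μ)) := by
      rw [Measure.map_fst_prod]
      exact hgon.aestronglyMeasurable.smul_measure _
    exact h1.comp_measurable measurable_fst
  have hS : MeasurableSet {q : ℝ × ℝ | q.2 < q.1} :=
    measurableSet_lt measurable_snd measurable_fst
  have hsm : AEStronglyMeasurable (Function.uncurry f) (μ.prod μ) := by
    have : Function.uncurry f = {q : ℝ × ℝ | q.2 < q.1}.indicator (fun q => g q.1) := by
      funext q; cases q; rfl
    rw [this]
    exact hsm1.indicator hS
  -- μ-measure of Iio x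
  have hmeas : ∀ x ∈ Ioc (0:ℝ) ℓ, (μ (Iio x)).toReal = x := by
    intro x hx
    rw [hμ, Measure.restrict_apply measurableSet_Iio]
    have : Iio x ∩ Ioc 0 ℓ = Ioo 0 x := by
      ext t
      simp only [mem_inter_iff, mem_Iio, mem_Ioc, mem_Ioo]
      constructor
      · rintro ⟨h1, h2, _⟩; exact ⟨h2, h1⟩
      · rintro ⟨h1, h2⟩; exact ⟨h2, h1, le_trans h2.le hx.2⟩
    rw [this, Real.volume_Ioo, ENNReal.toReal_ofReal (by linarith [hx.1])]
    ring
  -- inner integral in t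
  have hinner1 : ∀ x : ℝ, (fun t => f x t) = (Iio x).indicator (fun _ => g x) := by
    intro x
    funext t
    by_cases h : t < x <;> simp [hfeq, Set.indicator_apply, h]
  have h1 : ∀ x : ℝ, Integrable (fun t => f x t) μ := by
    intro x
    rw [hinner1 x]
    exact (integrable_const _).indicator measurableSet_Iio
  have h2 : Integrable (fun x => ∫ t, ‖f x t‖ ∂μ) μ := by
    have heq : ∀ᵐ x ∂μ, (∫ t, ‖f x t‖ ∂μ) = x * ‖g x‖ := by
      filter_upwards [ae_restrict_mem measurableSet_Ioc] with x hx
      have : (fun t => ‖f x t‖) = (Iio x).indicator (fun _ => ‖g x‖) := by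
        funext t
        by_cases h : t < x <;> simp [hfeq, Set.indicator_apply, h]
      rw [this, integral_indicator_const _ measurableSet_Iio, measureReal_def, hmeas x hx, smul_eq_mul]
    have hint2 : Integrable (fun x => x * ‖g x‖) μ := by
      apply Integrable.bdd_mul (c := ℓ) hgon.norm
        measurable_id.aestronglyMeasurable
      filter_upwards [ae_restrict_mem measurableSet_Ioc] with x hx
      simp only [id_eq, Real.norm_eq_abs]
      rw [abs_of_pos hx.1]
      exact hx.2
    exact hint2.congr (heq.mono fun x hx => hx.symm)
  have hint : Integrable (Function.uncurry f) (μ.prod μ) := by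
    refine (integrable_prod_iff hsm).mpr ⟨ae_of_all _ h1, ?_⟩
    exact h2
  have swap := integral_integral_swap hint
  -- LHS
  have hL : (∫ x, ∫ t, f x t ∂μ ∂μ) = ∫ x in (0:ℝ)..ℓ, g x * x := by
    rw [integral_of_le hℓ.le]
    apply setIntegral_congr_fun measurableSet_Ioc
    intro x hx
    show (∫ t, f x t ∂μ) = g x * x
    rw [hinner1 x, integral_indicator_const _ measurableSet_Iio, measureReal_def, hmeas x hx, smul_eq_mul,
      mul_comm]
  -- RHS
  have hR : (∫ t, ∫ x, f x t ∂μ ∂μ) = ∫ t in (0:ℝ)..ℓ, (∫ x in t..ℓ, g x) := by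
    rw [integral_of_le hℓ.le]
    apply setIntegral_congr_fun measurableSet_Ioc
    intro t ht
    have heq2 : (fun x => f x t) = (Ioi t).indicator g := by
      funext x
      by_cases h : t < x <;> simp [hfeq, Set.indicator_apply, h]
    show (∫ x, f x t ∂μ) = ∫ x in t..ℓ, g x
    rw [heq2, MeasureTheory.integral_indicator measurableSet_Ioi, hμ,
      Measure.restrict_restrict measurableSet_Ioi]
    have : Ioi t ∩ Ioc 0 ℓ = Ioc t ℓ := by
      ext x
      simp only [mem_inter_iff, mem_Ioi, mem_Ioc]
      constructor
      · rintro ⟨h1, _, h3⟩; exact ⟨h1, h3⟩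
      · rintro ⟨h1, h2⟩; exact ⟨h1, lt_trans ht.1 h1, h2⟩
    rw [this, intervalIntegral.integral_of_le ht.2]
  rw [← hL, ← hR]
  exact swap

lemma intF_eq (ℓ : ℝ) (hℓ : 0 < ℓ) (g F : ℝ → ℝ)
    (hg_int : IntervalIntegrable g volume 0 ℓ)
    (hFg : ∀ a b : ℝ, a ≤ b → F b - F a = ∫ t in a..b, g t) :
    ∫ x in (0:ℝ)..ℓ, F x = ℓ * F ℓ - ∫ x in (0:ℝ)..ℓ, g x * x := by
  have hgicc : IntegrableOn g (uIcc (0:ℝ) ℓ) volume := by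
    rw [uIcc_of_le hℓ.le, integrableOn_Icc_iff_integrableOn_Ioc]
    exact (intervalIntegrable_iff_integrableOn_Ioc_of_le hℓ.le).mp hg_int
  have hcont : ContinuousOn (fun t => ∫ x in t..ℓ, g x) (uIcc (0:ℝ) ℓ) :=
    intervalIntegral.continuousOn_primitive_interval_left hgicc
  have hprim_ii : IntervalIntegrable (fun t => ∫ x in t..ℓ, g x) volume 0 ℓ :=
    hcont.intervalIntegrable
  have hFeq : EqOn F (fun t => F ℓ - ∫ x in t..ℓ, g x) (uIcc (0:ℝ) ℓ) := by
    intro t ht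
    rw [uIcc_of_le hℓ.le] at ht
    have := hFg t ℓ ht.2
    simp only
    linarith
  rw [intervalIntegral.integral_congr hFeq,
    intervalIntegral.integral_sub intervalIntegrable_const hprim_ii,
    fubini_triangle ℓ hℓ g hg_int]
  simp [smul_eq_mul]


lemma psi_int (ℓ : ℝ) (hℓ : 0 < ℓ) (g : ℝ → ℝ)
    (hg_int : IntervalIntegrable g volume 0 ℓ) (q : ℝ) :
    IntervalIntegrable (fun x => g x * (-psiPer ℓ (q - x))) volume 0 ℓ := by
  have hψmeas : AEStronglyMeasurable (fun x => -psiPer ℓ (q - x))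
      (volume.restrict (Ioc (0:ℝ) ℓ)) := by
    apply Measurable.aestronglyMeasurable
    unfold psiPer
    exact (((measurable_fract.comp ((measurable_const.sub measurable_id).div_const ℓ)).sub
      measurable_const)).neg
  rw [intervalIntegrable_iff_integrableOn_Ioc_of_le hℓ.le]
  have := (Integrable.bdd_mul (c := 2) ((intervalIntegrable_iff_integrableOn_Ioc_of_le hℓ.le).mp hg_int)
    hψmeas (ae_of_all _ (by
      intro x
      unfold psiPer
      rw [norm_neg, Real.norm_eq_abs]
      have h1 := Int.fract_nonneg ((q - x) / ℓ)
      have h2 := Int.fract_lt_one ((q - x) / ℓ)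
      rw [abs_le]; constructor <;> nlinarith)))
  exact this.congr (by filter_upwards with x using mul_comm _ _)

lemma per_point (ℓ : ℝ) (hℓ : 0 < ℓ) (g F : ℝ → ℝ)
    (hg_int : IntervalIntegrable g volume 0 ℓ)
    (hFg : ∀ a b : ℝ, a ≤ b → F b - F a = ∫ t in a..b, g t)
    (hFper : F ℓ = F 0)
    (p : ℝ) (hp : p ∈ Ico (0:ℝ) ℓ) :
    ∫ x in (0:ℝ)..ℓ, g x * (-psiPer ℓ (p - x))
      = F p - (1/ℓ) * ∫ x in (0:ℝ)..ℓ, F x := by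
  obtain ⟨hp0, hpl⟩ := hp
  have hgx_int : IntervalIntegrable (fun x => g x * x) volume 0 ℓ :=
    hg_int.mul_continuousOn continuousOn_id
  -- the integrand is interval integrable on [0,ℓ], hence on subintervals
  have hint : IntervalIntegrable (fun x => g x * (-psiPer ℓ (p - x))) volume 0 ℓ :=
    psi_int ℓ hℓ g hg_int p
  have hg1 : IntervalIntegrable g volume 0 p :=
    hg_int.mono_set (by rw [uIcc_of_le hp0, uIcc_of_le hℓ.le]; exact Icc_subset_Icc le_rfl hpl.le)
  have hg2 : IntervalIntegrable g volume p ℓ :=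
    hg_int.mono_set (by rw [uIcc_of_le hpl.le, uIcc_of_le hℓ.le]; exact Icc_subset_Icc hp0 le_rfl)
  have hgx1 : IntervalIntegrable (fun x => g x * x) volume 0 p :=
    hgx_int.mono_set (by rw [uIcc_of_le hp0, uIcc_of_le hℓ.le]; exact Icc_subset_Icc le_rfl hpl.le)
  have hgx2 : IntervalIntegrable (fun x => g x * x) volume p ℓ :=
    hgx_int.mono_set (by rw [uIcc_of_le hpl.le, uIcc_of_le hℓ.le]; exact Icc_subset_Icc hp0 le_rfl)
  have hsub1 : IntervalIntegrable (fun x => g x * (-psiPer ℓ (p - x))) volume 0 p :=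
    hint.mono_set (by rw [uIcc_of_le hp0, uIcc_of_le hℓ.le]; exact Icc_subset_Icc le_rfl hpl.le)
  have hsub2 : IntervalIntegrable (fun x => g x * (-psiPer ℓ (p - x))) volume p ℓ :=
    hint.mono_set (by rw [uIcc_of_le hpl.le, uIcc_of_le hℓ.le]; exact Icc_subset_Icc hp0 le_rfl)
  have hsplit := intervalIntegral.integral_add_adjacent_intervals hsub1 hsub2
  have hA : ∫ x in (0:ℝ)..p, g x * (-psiPer ℓ (p - x))
      = (∫ x in (0:ℝ)..p, g x * x) / ℓ + (1/2 - p/ℓ) * ∫ x in (0:ℝ)..p, g x := by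
    have heq : EqOn (fun x => g x * (-psiPer ℓ (p - x)))
        (fun x => g x * x / ℓ + (1/2 - p/ℓ) * g x) (uIcc 0 p) := by
      intro x hx
      rw [uIcc_of_le hp0] at hx
      have hfr : Int.fract ((p - x)/ℓ) = (p - x)/ℓ :=
        Int.fract_eq_self.mpr ⟨div_nonneg (by linarith [hx.2]) hℓ.le,
          (div_lt_one hℓ).mpr (by linarith [hx.1])⟩
      simp only [psiPer]
      rw [hfr]
      field_simp
      ring
    rw [intervalIntegral.integral_congr heq,
      intervalIntegral.integral_add (hgx1.div_const ℓ) (hg1.const_mul _),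
      intervalIntegral.integral_div, intervalIntegral.integral_const_mul]
  have hB : ∫ x in p..ℓ, g x * (-psiPer ℓ (p - x))
      = (∫ x in p..ℓ, g x * x) / ℓ - (1/2 + p/ℓ) * ∫ x in p..ℓ, g x := by
    have heq : ∀ x ∈ Ioc p ℓ, g x * (-psiPer ℓ (p - x))
        = g x * x / ℓ - (1/2 + p/ℓ) * g x := by
      intro x hx
      have hfr : Int.fract ((p - x)/ℓ) = (p - x)/ℓ + 1 := by
        have h1 : Int.fract ((p - x)/ℓ) = Int.fract ((p - x)/ℓ + 1) :=
          Int.fract_eq_fract.mpr ⟨-1, by push_cast; ring⟩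
        rw [h1]
        refine Int.fract_eq_self.mpr ⟨?_, ?_⟩
        · have : (0:ℝ) ≤ (p - x + ℓ)/ℓ := div_nonneg (by linarith [hx.2]) hℓ.le
          have h2 : (p - x + ℓ)/ℓ = (p - x)/ℓ + 1 := by field_simp
          linarith [h2 ▸ this]
        · have : (p - x)/ℓ < 0 := div_neg_of_neg_of_pos (by linarith [hx.1]) hℓ
          linarith
      simp only [psiPer]
      rw [hfr]
      field_simp
      ring
    have h2 : ∫ x in p..ℓ, g x * (-psiPer ℓ (p - x))
        = ∫ x in p..ℓ, (g x * x / ℓ - (1/2 + p/ℓ) * g x) := by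
      rw [intervalIntegral.integral_of_le hpl.le, intervalIntegral.integral_of_le hpl.le]
      exact setIntegral_congr_fun measurableSet_Ioc heq
    rw [h2, intervalIntegral.integral_sub (hgx2.div_const ℓ) (hg2.const_mul _),
      intervalIntegral.integral_div, intervalIntegral.integral_const_mul]
  have hIp := hFg 0 p hp0
  have hIq := hFg p ℓ hpl.le
  have hIA := intervalIntegral.integral_add_adjacent_intervals hgx1 hgx2
  have hF := intF_eq ℓ hℓ g F hg_int hFg
  rw [← hsplit, hA, hB, hF]
  linear_combination (1/ℓ) * hIA - (1/2 - p/ℓ) * hIp + (1/2 + p/ℓ) * hIq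
    + (1/2 - p/ℓ) * hFper + F ℓ * (mul_inv_cancel₀ hℓ.ne')

lemma per_point_gen (ℓ : ℝ) (hℓ : 0 < ℓ) (g F : ℝ → ℝ)
    (hg_int : IntervalIntegrable g volume 0 ℓ)
    (hF_per : Function.Periodic F ℓ)
    (hFg : ∀ a b : ℝ, a ≤ b → F b - F a = ∫ t in a..b, g t)
    (q : ℝ) :
    ∫ x in (0:ℝ)..ℓ, g x * (-psiPer ℓ (q - x))
      = F q - (1/ℓ) * ∫ x in (0:ℝ)..ℓ, F x := by
  have hFper : F ℓ = F 0 := by simpa using hF_per 0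
  set r : ℝ := q - (⌊q/ℓ⌋ : ℝ) * ℓ with hr
  have hrval : r = ℓ * Int.fract (q/ℓ) := by
    rw [hr, Int.fract]
    field_simp
  have hrI : r ∈ Ico (0:ℝ) ℓ := by
    rw [hrval]
    constructor
    · exact mul_nonneg hℓ.le (Int.fract_nonneg _)
    · calc ℓ * Int.fract (q/ℓ) < ℓ * 1 :=
            (mul_lt_mul_iff_right₀ hℓ).mpr (Int.fract_lt_one _)
        _ = ℓ := mul_one ℓ
  have hFq : F q = F r := (hF_per.sub_int_mul_eq ⌊q/ℓ⌋).symm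
  have hψ : ∀ x : ℝ, psiPer ℓ (q - x) = psiPer ℓ (r - x) := by
    intro x
    unfold psiPer
    congr 1
    refine Int.fract_eq_fract.mpr ⟨⌊q/ℓ⌋, ?_⟩
    rw [hr]
    field_simp
    ring
  have hfun : (fun x => g x * (-psiPer ℓ (q - x)))
      = fun x => g x * (-psiPer ℓ (r - x)) := by
    funext x
    rw [hψ x]
  rw [hfun, hFq]
  exact per_point ℓ hℓ g F hg_int hFg hFper r hrI

theorem stmt_0 (ℓ : ℝ) (hℓ : 0 < ℓ) (g F : ℝ → ℝ)
    (hg_per : Function.Periodic g ℓ)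
    (hg_int : IntervalIntegrable g MeasureTheory.volume 0 ℓ)
    (hF_per : Function.Periodic F ℓ)
    (hFg : ∀ a b : ℝ, a ≤ b → F b - F a = ∫ t in a..b, g t)
    (N : ℕ) (hN : 1 ≤ N) (p : Fin N → ℝ) :
    (1 / N : ℝ) * ∑ n, F (p n) - (1 / ℓ) * ∫ x in (0:ℝ)..ℓ, F x
      = ∫ x in (0:ℝ)..ℓ, g x * (-(1 / N : ℝ) * ∑ n, psiPer ℓ (p n - x)) := by
  have hNne : (N:ℝ) ≠ 0 := Nat.cast_ne_zero.mpr (by omega)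
  have hcong : ∀ x : ℝ, g x * (-(1 / N : ℝ) * ∑ n, psiPer ℓ (p n - x))
      = ∑ n, (1 / N : ℝ) * (g x * (-psiPer ℓ (p n - x))) := by
    intro x
    rw [← Finset.mul_sum, ← Finset.mul_sum, Finset.sum_neg_distrib]
    ring
  have h1 : ∫ x in (0:ℝ)..ℓ, g x * (-(1 / N : ℝ) * ∑ n, psiPer ℓ (p n - x))
      = ∫ x in (0:ℝ)..ℓ, ∑ n, (1 / N : ℝ) * (g x * (-psiPer ℓ (p n - x))) :=
    intervalIntegral.integral_congr (fun x _ => hcong x)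
  rw [h1, intervalIntegral.integral_finset_sum
    (fun n _ => (psi_int ℓ hℓ g hg_int (p n)).const_mul _)]
  have h2 : ∀ n : Fin N, (∫ x in (0:ℝ)..ℓ, (1 / N : ℝ) * (g x * (-psiPer ℓ (p n - x))))
      = (1 / N : ℝ) * (F (p n) - (1/ℓ) * ∫ x in (0:ℝ)..ℓ, F x) := by
    intro n
    rw [intervalIntegral.integral_const_mul, per_point_gen ℓ hℓ g F hg_int hF_per hFg (p n)]
  rw [Finset.sum_congr rfl (fun n _ => h2 n), ← Finset.mul_sum, Finset.sum_sub_distrib,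
    Finset.sum_const, Finset.card_univ, Fintype.card_fin]
  push_cast
  field_simp
  rw [nsmul_eq_mul]
  field_simp
end

section
/- Let ℓ > 0 and let p₁, …, p_N ∈ ℝ (N ≥ 1). With G(x) = −(1/N) ∑_{n=1}^N Ψ_ℓ(p_n − x), one has ∫_0^ℓ G(x)² dx = (ℓ / (2N²)) ∑_{1 ≤ i, j ≤ N} Φ_ℓ(p_i − p_j). -/
open MeasureTheory intervalIntegral

/-- The `ℓ`-periodic second Bernoulli function `Φ_ℓ(x) = {x/ℓ}² - {x/ℓ} + 1/6`. -/
noncomputable def phiPer (ℓ x : ℝ) : ℝ :=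
  Int.fract (x / ℓ) ^ 2 - Int.fract (x / ℓ) + 1 / 6

lemma fract_form_intble {f g : ℝ → ℝ} (hf : Measurable f) (hg : Measurable g) (s t : ℝ) :
    IntervalIntegrable (fun u => (Int.fract (f u) - 1/2) * (Int.fract (g u) - 1/2))
      volume s t := by
  rw [intervalIntegrable_iff]
  haveI : IsFiniteMeasure (volume.restrict (Set.uIoc s t)) :=
    ⟨by rw [Measure.restrict_apply_univ, Set.uIoc]; exact measure_Ioc_lt_top⟩
  constructor
  · exact (((measurable_fract.comp hf).sub measurable_const).mul
      ((measurable_fract.comp hg).sub measurable_const)).aestronglyMeasurable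
  · apply MeasureTheory.HasFiniteIntegral.of_bounded (C := 1)
    filter_upwards with u
    have h1 := Int.fract_nonneg (f u); have h2 := Int.fract_lt_one (f u)
    have h3 := Int.fract_nonneg (g u); have h4 := Int.fract_lt_one (g u)
    rw [Real.norm_eq_abs, abs_mul]
    have e1 : |Int.fract (f u) - 1/2| ≤ 1 := abs_le.2 ⟨by linarith, by linarith⟩
    have e2 : |Int.fract (g u) - 1/2| ≤ 1 := abs_le.2 ⟨by linarith, by linarith⟩
    calc |Int.fract (f u) - 1/2| * |Int.fract (g u) - 1/2| ≤ 1 * 1 :=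
          mul_le_mul e1 e2 (abs_nonneg _) zero_le_one
      _ = 1 := by ring

lemma poly_int (a b p q : ℝ) :
    ∫ u in a..b, (u^2 + p*u + q) =
      (b^3/3 + p*b^2/2 + q*b) - (a^3/3 + p*a^2/2 + q*a) := by
  apply intervalIntegral.integral_eq_sub_of_hasDerivAt
  · intro u _
    have h1 : HasDerivAt (fun u : ℝ => u^3/3) (u^2) u := by
      simpa using (hasDerivAt_pow 3 u).div_const 3
    have h2 : HasDerivAt (fun u : ℝ => p*u^2/2) (p*u) u := by
      have := ((hasDerivAt_pow 2 u).const_mul p).div_const 2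
      exact this.congr_deriv (by norm_num; ring)
    have h3 : HasDerivAt (fun u : ℝ => q*u) q u := by
      simpa using (hasDerivAt_id u).const_mul q
    have := (h1.add h2).add h3
    exact this
  · exact (Continuous.intervalIntegrable (by continuity) _ _)

lemma ae_ne (c : ℝ) : ∀ᵐ u : ℝ, u ≠ c := by
  rw [MeasureTheory.ae_iff]
  have : {a : ℝ | ¬ a ≠ c} = {c} := by ext x; simp
  rw [this]; exact measure_singleton c

lemma keyJ (c : ℝ) :
    ∫ u in (0:ℝ)..1, (Int.fract (u + c) - 1/2) * (Int.fract u - 1/2)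
      = (Int.fract c ^ 2 - Int.fract c + 1/6) / 2 := by
  -- reduce c to its fractional part
  have hred : ∀ u : ℝ, Int.fract (u + c) = Int.fract (u + Int.fract c) := by
    intro u
    have : u + c = u + Int.fract c + (⌊c⌋ : ℤ) := by
      rw [Int.fract]; ring
    rw [this, Int.fract_add_intCast]
  simp_rw [hred]
  set t := Int.fract c with ht
  have ht0 : 0 ≤ t := Int.fract_nonneg c
  have ht1 : t < 1 := Int.fract_lt_one c
  have hint1 : IntervalIntegrable
      (fun u => (Int.fract (u + t) - 1/2) * (Int.fract u - 1/2)) volume 0 (1 - t) :=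
    fract_form_intble (measurable_id.add_const t) measurable_id _ _
  have hint2 : IntervalIntegrable
      (fun u => (Int.fract (u + t) - 1/2) * (Int.fract u - 1/2)) volume (1 - t) 1 :=
    fract_form_intble (measurable_id.add_const t) measurable_id _ _
  rw [← intervalIntegral.integral_add_adjacent_intervals hint1 hint2]
  have hA : ∫ u in (0:ℝ)..(1 - t), (Int.fract (u + t) - 1/2) * (Int.fract u - 1/2)
      = ∫ u in (0:ℝ)..(1 - t), (u^2 + (t - 1)*u + (1/4 - t/2)) := by
    apply intervalIntegral.integral_congr_ae
    filter_upwards [ae_ne (1 - t)] with u hu hmem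
    rw [Set.uIoc_of_le (by linarith)] at hmem
    obtain ⟨hu0, hu1⟩ := hmem
    have hu1' : u < 1 - t := lt_of_le_of_ne hu1 hu
    have e1 : Int.fract u = u := Int.fract_eq_self.2 ⟨le_of_lt hu0, by linarith⟩
    have e2 : Int.fract (u + t) = u + t := Int.fract_eq_self.2 ⟨by linarith, by linarith⟩
    rw [e1, e2]; ring
  have hB : ∫ u in (1 - t)..1, (Int.fract (u + t) - 1/2) * (Int.fract u - 1/2)
      = ∫ u in (1 - t)..1, (u^2 + (t - 2)*u + (3/4 - t/2)) := by
    apply intervalIntegral.integral_congr_ae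
    filter_upwards [ae_ne (1 : ℝ)] with u hu hmem
    rw [Set.uIoc_of_le (by linarith)] at hmem
    obtain ⟨hu0, hu1⟩ := hmem
    have hu1' : u < 1 := lt_of_le_of_ne hu1 hu
    have e1 : Int.fract u = u := Int.fract_eq_self.2 ⟨by linarith, hu1'⟩
    have e2 : Int.fract (u + t) = u + t - 1 := by
      have h := Int.fract_add_one (u + t - 1)
      rw [show u + t - 1 + 1 = u + t by ring] at h
      rw [h, Int.fract_eq_self.2 ⟨by linarith, by linarith⟩]
    rw [e1, e2]; ring
  rw [hA, hB, poly_int, poly_int]; ring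

lemma keyL1 (a b : ℝ) :
    ∫ x in (0:ℝ)..1, (Int.fract (a - x) - 1/2) * (Int.fract (b - x) - 1/2)
      = (Int.fract (a - b) ^ 2 - Int.fract (a - b) + 1/6) / 2 := by
  have hcomp : (fun x : ℝ => (Int.fract (a - x) - 1/2) * (Int.fract (b - x) - 1/2))
      = fun x : ℝ => (fun u : ℝ => (Int.fract (u + (a - b)) - 1/2) * (Int.fract u - 1/2)) (b - x) := by
    funext x; simp only []; ring_nf
  rw [hcomp, intervalIntegral.integral_comp_sub_left
    (fun u : ℝ => (Int.fract (u + (a - b)) - 1/2) * (Int.fract u - 1/2)) b]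
  have hper : Function.Periodic
      (fun u : ℝ => (Int.fract (u + (a - b)) - 1/2) * (Int.fract u - 1/2)) 1 := by
    intro u
    simp only []
    rw [show u + 1 + (a - b) = (u + (a - b)) + 1 by ring, Int.fract_add_one, Int.fract_add_one]
  have := hper.intervalIntegral_add_eq (b - 1) 0
  rw [show b - 1 + 1 = b by ring] at this
  rw [show b - (1:ℝ) = b - 1 by ring, show b - (0:ℝ) = b by ring, this, zero_add]
  exact keyJ (a - b)

lemma keyL (ℓ : ℝ) (hℓ : 0 < ℓ) (a b : ℝ) :
    ∫ x in (0:ℝ)..ℓ, psiPer ℓ (a - x) * psiPer ℓ (b - x)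
      = ℓ / 2 * phiPer ℓ (a - b) := by
  have hℓ0 : ℓ ≠ 0 := ne_of_gt hℓ
  have hcomp : (fun x : ℝ => psiPer ℓ (a - x) * psiPer ℓ (b - x))
      = fun x : ℝ => (fun y : ℝ => (Int.fract (a/ℓ - y) - 1/2) * (Int.fract (b/ℓ - y) - 1/2)) (x / ℓ) := by
    funext x
    simp only [psiPer]
    rw [show (a - x)/ℓ = a/ℓ - x/ℓ by ring, show (b - x)/ℓ = b/ℓ - x/ℓ by ring]
  have hdiv := intervalIntegral.integral_comp_div (a := 0) (b := ℓ) (c := ℓ)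
    (fun y : ℝ => (Int.fract (a/ℓ - y) - 1/2) * (Int.fract (b/ℓ - y) - 1/2)) hℓ0
  rw [hcomp, hdiv, zero_div, div_self hℓ0, keyL1]
  rw [show a/ℓ - b/ℓ = (a - b)/ℓ by ring]
  simp only [phiPer, smul_eq_mul]
  ring

theorem stmt_1 (ℓ : ℝ) (hℓ : 0 < ℓ) (N : ℕ) (hN : 1 ≤ N) (p : Fin N → ℝ) :
    (∫ x in (0:ℝ)..ℓ, (-(1 / N : ℝ) * ∑ n, psiPer ℓ (p n - x)) ^ 2)
      = (ℓ / (2 * N ^ 2)) * ∑ i, ∑ j, phiPer ℓ (p i - p j) := by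
  have hN0 : (N : ℝ) ≠ 0 := Nat.cast_ne_zero.2 (by omega)
  have hpt : ∀ x : ℝ, (-(1 / N : ℝ) * ∑ n, psiPer ℓ (p n - x)) ^ 2
      = (1 / (N:ℝ)^2) * ∑ i, ∑ j, psiPer ℓ (p i - x) * psiPer ℓ (p j - x) := by
    intro x
    rw [← Finset.sum_mul_sum]
    ring
  simp_rw [hpt]
  rw [intervalIntegral.integral_const_mul]
  have hint : ∀ i : Fin N, ∀ j : Fin N, IntervalIntegrable
      (fun x => psiPer ℓ (p i - x) * psiPer ℓ (p j - x)) volume 0 ℓ := by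
    intro i j
    have : (fun x => psiPer ℓ (p i - x) * psiPer ℓ (p j - x))
        = fun x => (Int.fract ((p i - x)/ℓ) - 1/2) * (Int.fract ((p j - x)/ℓ) - 1/2) := rfl
    rw [this]
    exact fract_form_intble ((measurable_const.sub measurable_id).div_const ℓ)
      ((measurable_const.sub measurable_id).div_const ℓ) 0 ℓ
  have hinner : ∀ i : Fin N, IntervalIntegrable
      (fun x => ∑ j, psiPer ℓ (p i - x) * psiPer ℓ (p j - x)) volume 0 ℓ := by
    intro i
    have := IntervalIntegrable.sum (μ := volume) Finset.univ
      (fun j (_ : j ∈ (Finset.univ : Finset (Fin N))) => hint i j)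
    simpa [Finset.sum_fn] using this
  rw [intervalIntegral.integral_finset_sum (fun i _ => hinner i)]
  have : ∀ i : Fin N, (∫ x in (0:ℝ)..ℓ, ∑ j, psiPer ℓ (p i - x) * psiPer ℓ (p j - x))
      = ∑ j, ℓ / 2 * phiPer ℓ (p i - p j) := by
    intro i
    rw [intervalIntegral.integral_finset_sum (fun j _ => hint i j)]
    exact Finset.sum_congr rfl fun j _ => keyL ℓ hℓ (p i) (p j)
  simp_rw [this, ← Finset.mul_sum]
  rw [← mul_assoc]
  congr 1
  rw [div_mul_div_comm, one_mul, mul_comm ((N:ℝ)^2) 2]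
end

section
/- Let ℓ > 0 and let p₁, …, p_N ∈ ℝ (N ≥ 1). Then ∑_{1 ≤ i, j ≤ N} Φ_ℓ(p_i − p_j) ≥ 0; that is, the ℓ-periodic second Bernoulli function Φ_ℓ is positive semidefinite. -/
open MeasureTheory Set intervalIntegral

/-- auxiliary step function `t ↦ 1_{t ≤ a} - (1 - t)` -/
noncomputable def gstep (a : ℝ) : ℝ → ℝ := fun t => (Set.Iic a).indicator 1 t - (1 - t)

lemma intervalIntegrable_indicator (a : ℝ) (f : ℝ → ℝ) (hf : IntervalIntegrable f volume 0 1) :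
    IntervalIntegrable ((Set.Iic a).indicator f) volume 0 1 :=
  ⟨hf.1.indicator measurableSet_Iic, hf.2.indicator measurableSet_Iic⟩

lemma gstep_mul (a b t : ℝ) :
    gstep a t * gstep b t =
      (Set.Iic (min a b)).indicator 1 t - (Set.Iic a).indicator (fun t => 1 - t) t
        - (Set.Iic b).indicator (fun t => 1 - t) t + (1 - t) ^ 2 := by
  by_cases h1 : t ≤ a <;> by_cases h2 : t ≤ b <;>
    simp [gstep, Set.indicator_apply, Set.mem_Iic, h1, h2, le_min_iff] <;> ring

lemma gstep_intervalIntegrable (a : ℝ) : IntervalIntegrable (gstep a) volume 0 1 :=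
  (intervalIntegrable_indicator a 1 (continuous_const.intervalIntegrable 0 1)).sub
    ((continuous_const.sub continuous_id).intervalIntegrable 0 1)

lemma gstep_mul_intervalIntegrable (a b : ℝ) :
    IntervalIntegrable (fun t => gstep a t * gstep b t) volume 0 1 := by
  have : (fun t => gstep a t * gstep b t) =
      fun t => (Set.Iic (min a b)).indicator 1 t - (Set.Iic a).indicator (fun t => 1 - t) t
        - (Set.Iic b).indicator (fun t => 1 - t) t + (1 - t) ^ 2 := funext (gstep_mul a b)
  rw [this]
  have hc : IntervalIntegrable (fun t : ℝ => 1 - t) volume 0 1 :=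
    (continuous_const.sub continuous_id).intervalIntegrable 0 1
  exact (((intervalIntegrable_indicator _ 1 (continuous_const.intervalIntegrable 0 1)).sub
    (intervalIntegrable_indicator a _ hc)).sub (intervalIntegrable_indicator b _ hc)).add
    ((continuous_const.sub continuous_id).pow 2 |>.intervalIntegrable 0 1)

lemma integral_indicator_Iic (a : ℝ) (ha : a ∈ Set.Icc (0:ℝ) 1) (f : ℝ → ℝ) :
    ∫ t in (0:ℝ)..1, (Set.Iic a).indicator f t = ∫ t in (0:ℝ)..a, f t := by
  have : Set.Iic a = {x : ℝ | x ≤ a} := rfl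
  rw [this, intervalIntegral.integral_indicator ha]

lemma int_one_sub (c : ℝ) : ∫ t in (0:ℝ)..c, (1 - t) = c - c^2/2 := by
  rw [intervalIntegral.integral_sub intervalIntegrable_const
    intervalIntegral.intervalIntegrable_id]
  simp [integral_id, integral_one]
  try ring

lemma int_one_sub_sq : ∫ t in (0:ℝ)..1, (1 - t)^2 = 1/3 := by
  have h : ∀ t : ℝ, (1 - t)^2 = 1 - 2*t + t^2 := fun t => by ring
  have h2 : (fun t : ℝ => (1 - t)^2) = fun t : ℝ => 1 - 2*t + t^2 := funext h
  rw [h2, intervalIntegral.integral_add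
      (intervalIntegrable_const.sub
        (intervalIntegral.intervalIntegrable_id.const_mul 2))
      (intervalIntegral.intervalIntegrable_pow 2),
    intervalIntegral.integral_sub intervalIntegrable_const
      (intervalIntegral.intervalIntegrable_id.const_mul 2),
    intervalIntegral.integral_const_mul]
  simp [integral_id, integral_one, integral_pow]
  norm_num

lemma gstep_integral (a : ℝ) (ha : a ∈ Set.Icc (0:ℝ) 1) :
    ∫ t in (0:ℝ)..1, gstep a t = a - 1/2 := by
  have h1 : IntervalIntegrable ((Set.Iic a).indicator (1 : ℝ → ℝ)) volume 0 1 :=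
    intervalIntegrable_indicator a 1 (continuous_const.intervalIntegrable 0 1)
  have h2 : IntervalIntegrable (fun t : ℝ => 1 - t) volume 0 1 :=
    (continuous_const.sub continuous_id).intervalIntegrable 0 1
  rw [show gstep a = fun t => (Set.Iic a).indicator 1 t - (1 - t) from rfl,
    intervalIntegral.integral_sub h1 h2, integral_indicator_Iic a ha, int_one_sub 1]
  simp
  norm_num

lemma gstep_kernel (a b : ℝ) (ha : a ∈ Set.Icc (0:ℝ) 1) (hb : b ∈ Set.Icc (0:ℝ) 1) :
    ∫ t in (0:ℝ)..1, gstep a t * gstep b t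
      = min a b - a + a^2/2 - b + b^2/2 + 1/3 := by
  have hc : IntervalIntegrable (fun t : ℝ => 1 - t) volume 0 1 :=
    (continuous_const.sub continuous_id).intervalIntegrable 0 1
  have hone : IntervalIntegrable ((Set.Iic (min a b)).indicator (1 : ℝ → ℝ)) volume 0 1 :=
    intervalIntegrable_indicator _ 1 (continuous_const.intervalIntegrable 0 1)
  have hA : IntervalIntegrable ((Set.Iic a).indicator (fun t : ℝ => 1 - t)) volume 0 1 :=
    intervalIntegrable_indicator a _ hc
  have hB : IntervalIntegrable ((Set.Iic b).indicator (fun t : ℝ => 1 - t)) volume 0 1 :=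
    intervalIntegrable_indicator b _ hc
  have hq : IntervalIntegrable (fun t : ℝ => (1 - t)^2) volume 0 1 :=
    ((continuous_const.sub continuous_id).pow 2).intervalIntegrable 0 1
  have hmin : min a b ∈ Set.Icc (0:ℝ) 1 :=
    ⟨le_min ha.1 hb.1, (min_le_left a b).trans ha.2⟩
  calc ∫ t in (0:ℝ)..1, gstep a t * gstep b t
      = ∫ t in (0:ℝ)..1, ((Set.Iic (min a b)).indicator 1 t
          - (Set.Iic a).indicator (fun t => 1 - t) t
          - (Set.Iic b).indicator (fun t => 1 - t) t + (1 - t) ^ 2) := by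
        exact intervalIntegral.integral_congr fun t _ => gstep_mul a b t
    _ = min a b - a + a^2/2 - b + b^2/2 + 1/3 := by
        rw [intervalIntegral.integral_add ((hone.sub hA).sub hB) hq,
          intervalIntegral.integral_sub (hone.sub hA) hB,
          intervalIntegral.integral_sub hone hA,
          integral_indicator_Iic _ hmin, integral_indicator_Iic _ ha,
          integral_indicator_Iic _ hb, int_one_sub a, int_one_sub b]
        rw [int_one_sub_sq]
        simp [integral_one]
        ring

lemma myII_sum {ι : Type*} (s : Finset ι) (f : ι → ℝ → ℝ)
    (h : ∀ i ∈ s, IntervalIntegrable (f i) volume 0 1) :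
    IntervalIntegrable (fun t => ∑ i ∈ s, f i t) volume 0 1 := by
  have h2 := IntervalIntegrable.sum s h
  rwa [Finset.sum_fn] at h2

theorem stmt_3 (ℓ : ℝ) (hℓ : 0 < ℓ) (N : ℕ) (hN : 1 ≤ N) (p : Fin N → ℝ) :
    0 ≤ ∑ i, ∑ j, phiPer ℓ (p i - p j) := by
  set u : Fin N → ℝ := fun i => Int.fract (p i / ℓ) with hu_def
  have hu0 : ∀ i, 0 ≤ u i := fun i => Int.fract_nonneg _
  have hu1 : ∀ i, u i < 1 := fun i => Int.fract_lt_one _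
  have huIcc : ∀ i, u i ∈ Set.Icc (0:ℝ) 1 := fun i => ⟨hu0 i, (hu1 i).le⟩
  -- Step A: pointwise formula
  have stepA : ∀ i j, phiPer ℓ (p i - p j) = (u i - u j)^2 - |u i - u j| + 1/6 := by
    intro i j
    have hfr : Int.fract ((p i - p j) / ℓ) = Int.fract (u i - u j) := by
      have : (p i - p j) / ℓ = (u i - u j) + (⌊p i / ℓ⌋ - ⌊p j / ℓ⌋ : ℤ) := by
        push_cast
        simp only [hu_def, Int.fract]
        ring
      rw [this, Int.fract_add_intCast]
    have hd : u i - u j ∈ Set.Ioo (-1 : ℝ) 1 :=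
      ⟨by linarith [hu0 i, hu0 j, hu1 i, hu1 j], by linarith [hu0 i, hu0 j, hu1 i, hu1 j]⟩
    unfold phiPer
    rw [hfr]
    rcases le_or_gt (u j) (u i) with h | h
    · rw [Int.fract_eq_self.mpr ⟨by linarith, hd.2⟩, abs_of_nonneg (by linarith)]
    · have hone : Int.fract (u i - u j + 1) = u i - u j + 1 :=
        Int.fract_eq_self.mpr ⟨by linarith [hd.1], by linarith⟩
      have h2 : u i - u j = (u i - u j + 1) - ((1:ℤ):ℝ) := by push_cast; ring
      rw [h2, Int.fract_sub_intCast, hone, abs_of_nonpos (by linarith)]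
      ring
  -- Step B : expression via kernel
  have stepB : ∀ i j, phiPer ℓ (p i - p j) =
      2 * (∫ t in (0:ℝ)..1, gstep (u i) t * gstep (u j) t)
        - 2 * ((u i - 1/2) * (u j - 1/2)) := by
    intro i j
    rw [stepA i j, gstep_kernel _ _ (huIcc i) (huIcc j)]
    rcases le_total (u i) (u j) with h | h
    · rw [min_eq_left h, abs_of_nonpos (by linarith)]; ring
    · rw [min_eq_right h, abs_of_nonneg (by linarith)]; ring
  set H : ℝ → ℝ := fun t => ∑ i, gstep (u i) t with hH_def
  set c : ℝ := ∑ i, (u i - 1/2) with hc_def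
  have hHint : IntervalIntegrable H volume 0 1 :=
    myII_sum _ _ fun i _ => gstep_intervalIntegrable (u i)
  have hH2int : IntervalIntegrable (fun t => H t ^ 2) volume 0 1 := by
    have : (fun t => H t ^ 2) =
        fun t => ∑ i, ∑ j, gstep (u i) t * gstep (u j) t := by
      funext t
      rw [hH_def]
      simp only [sq]
      rw [Finset.sum_mul_sum]
    rw [this]
    exact myII_sum _ _ fun i _ => myII_sum _ _ fun j _ => gstep_mul_intervalIntegrable _ _
  have hHc : ∫ t in (0:ℝ)..1, H t = c := by
    have h1 : ∫ t in (0:ℝ)..1, H t = ∑ i, ∫ t in (0:ℝ)..1, gstep (u i) t :=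
      intervalIntegral.integral_finset_sum (fun i _ => gstep_intervalIntegrable (u i))
    rw [h1, hc_def]
    exact Finset.sum_congr rfl fun i _ => gstep_integral _ (huIcc i)
  have hsumK : ∑ i, ∑ j, (∫ t in (0:ℝ)..1, gstep (u i) t * gstep (u j) t)
      = ∫ t in (0:ℝ)..1, H t ^ 2 := by
    calc ∑ i, ∑ j, (∫ t in (0:ℝ)..1, gstep (u i) t * gstep (u j) t)
        = ∑ i, ∫ t in (0:ℝ)..1, (∑ j, gstep (u i) t * gstep (u j) t) :=
          Finset.sum_congr rfl fun i _ =>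
            (intervalIntegral.integral_finset_sum
              fun j _ => gstep_mul_intervalIntegrable _ _).symm
      _ = ∫ t in (0:ℝ)..1, ∑ i, ∑ j, gstep (u i) t * gstep (u j) t :=
          (intervalIntegral.integral_finset_sum fun i _ =>
            myII_sum _ _ fun j _ => gstep_mul_intervalIntegrable _ _).symm
      _ = ∫ t in (0:ℝ)..1, H t ^ 2 := intervalIntegral.integral_congr fun t _ => by
          rw [← Finset.sum_mul_sum, hH_def, sq]
  have hvar : 0 ≤ (∫ t in (0:ℝ)..1, H t ^ 2) - c^2 := by
    have hnn : 0 ≤ ∫ t in (0:ℝ)..1, (H t - c)^2 :=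
      intervalIntegral.integral_nonneg (by norm_num) (fun t _ => sq_nonneg _)
    have hexp : ∫ t in (0:ℝ)..1, (H t - c)^2
        = (∫ t in (0:ℝ)..1, H t ^ 2) - 2*c*(∫ t in (0:ℝ)..1, H t) + c^2 := by
      have h1 : ∫ t in (0:ℝ)..1, (H t - c)^2
          = ∫ t in (0:ℝ)..1, (H t ^ 2 - (2*c) * H t + c^2) :=
        intervalIntegral.integral_congr fun t _ => by ring
      rw [h1, intervalIntegral.integral_add (hH2int.sub (hHint.const_mul (2*c)))
          intervalIntegrable_const,
        intervalIntegral.integral_sub hH2int (hHint.const_mul (2*c)),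
        intervalIntegral.integral_const_mul]
      simp
      try ring
    rw [hexp, hHc] at hnn
    nlinarith [hnn]
  have hc2 : ∑ i, ∑ j, (u i - 1/2) * (u j - 1/2) = c^2 := by
    rw [hc_def, sq, Finset.sum_mul_sum]
  have hS : ∑ i, ∑ j, phiPer ℓ (p i - p j)
      = 2 * (∑ i, ∑ j, ∫ t in (0:ℝ)..1, gstep (u i) t * gstep (u j) t)
        - 2 * (∑ i, ∑ j, (u i - 1/2) * (u j - 1/2)) := by
    rw [Finset.mul_sum, Finset.mul_sum, ← Finset.sum_sub_distrib]
    refine Finset.sum_congr rfl fun i _ => ?_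
    rw [Finset.mul_sum, Finset.mul_sum, ← Finset.sum_sub_distrib]
    exact Finset.sum_congr rfl fun j _ => stepB i j
  rw [hS, hsumK, hc2]
  linarith
end

section
/- Let ℓ > 0, let g : ℝ → ℝ be ℓ-periodic and Lebesgue integrable on [0,ℓ], and let F : ℝ → ℝ be an ℓ-periodic function satisfying F(b) − F(a) = ∫_a^b g(t) dt for all real a ≤ b. Then for every x ∈ ℝ, F(x) − (1/ℓ) ∫_0^ℓ F(t) dt = −∫_0^ℓ g(y) Ψ_ℓ(x − y) dy. -/
open MeasureTheory intervalIntegral Set Function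

/-- Fubini over the triangle. -/
lemma triangle_fubini (ℓ : ℝ) (hℓ : 0 < ℓ) (g : ℝ → ℝ)
    (hg : IntervalIntegrable g MeasureTheory.volume 0 ℓ) :
    ∫ t in (0:ℝ)..ℓ, (∫ s in (0:ℝ)..t, g s) = ∫ s in (0:ℝ)..ℓ, (ℓ - s) * g s := by
  set μ := volume.restrict (Ioc (0:ℝ) ℓ) with hμ
  have hgI : IntegrableOn g (Ioc 0 ℓ) := hg.1
  have hfin : IsFiniteMeasure μ := by
    constructor
    rw [hμ, Measure.restrict_apply_univ, Real.volume_Ioc]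
    exact ENNReal.ofReal_lt_top
  set f : ℝ × ℝ → ℝ := ({p : ℝ × ℝ | p.2 ≤ p.1}).indicator (fun p => g p.2) with hf
  have hmeas : MeasurableSet {p : ℝ × ℝ | p.2 ≤ p.1} :=
    measurableSet_le measurable_snd measurable_fst
  have hbase : Integrable (fun p : ℝ × ℝ => g p.2) (μ.prod μ) := by
    have := Integrable.mul_prod (μ := μ) (ν := μ) (f := fun _ : ℝ => (1:ℝ)) (g := g)
      (integrable_const 1) hgI
    simpa using this
  have hfint : Integrable f (μ.prod μ) := hbase.indicator hmeas
  have hswap : ∫ t, (∫ s, f (t, s) ∂μ) ∂μ = ∫ s, (∫ t, f (t, s) ∂μ) ∂μ := by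
    exact integral_integral_swap (f := fun t s => f (t, s)) hfint
  have hL : ∫ t in (0:ℝ)..ℓ, (∫ s in (0:ℝ)..t, g s) = ∫ t, (∫ s, f (t, s) ∂μ) ∂μ := by
    rw [intervalIntegral.integral_of_le hℓ.le]
    apply setIntegral_congr_fun measurableSet_Ioc
    intro t ht
    show (∫ s in (0:ℝ)..t, g s) = ∫ s, f (t, s) ∂μ
    have h1 : (fun s => f (t, s)) = (Iic t).indicator g := by
      funext s
      simp only [hf, Set.indicator_apply, Set.mem_setOf_eq, Set.mem_Iic]
    rw [h1, MeasureTheory.integral_indicator measurableSet_Iic,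
      Measure.restrict_restrict measurableSet_Iic]
    have h2 : Iic t ∩ Ioc 0 ℓ = Ioc 0 t := by
      ext y
      simp only [Set.mem_inter_iff, Set.mem_Iic, Set.mem_Ioc]
      constructor
      · rintro ⟨h, h0, _⟩; exact ⟨h0, h⟩
      · rintro ⟨h0, h⟩; exact ⟨h, h0, h.trans ht.2⟩
    rw [h2, intervalIntegral.integral_of_le ht.1.le]
  have hR : ∫ s, (∫ t, f (t, s) ∂μ) ∂μ = ∫ s in (0:ℝ)..ℓ, (ℓ - s) * g s := by
    rw [intervalIntegral.integral_of_le hℓ.le]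
    apply setIntegral_congr_fun measurableSet_Ioc
    intro s hs
    show (∫ t, f (t, s) ∂μ) = (ℓ - s) * g s
    have h1 : (fun t => f (t, s)) = (Ici s).indicator (fun _ => g s) := by
      funext t
      simp only [hf, Set.indicator_apply, Set.mem_setOf_eq, Set.mem_Ici]
    rw [h1, MeasureTheory.integral_indicator measurableSet_Ici,
      Measure.restrict_restrict measurableSet_Ici, MeasureTheory.setIntegral_const]
    have h2 : Ici s ∩ Ioc 0 ℓ = Icc s ℓ := by
      ext y
      simp only [Set.mem_inter_iff, Set.mem_Ici, Set.mem_Ioc, Set.mem_Icc]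
      constructor
      · rintro ⟨h, _, h2⟩; exact ⟨h, h2⟩
      · rintro ⟨h, h2⟩; exact ⟨h, hs.1.trans_le h, h2⟩
    rw [h2, measureReal_def, Real.volume_Icc, ENNReal.toReal_ofReal (by linarith [hs.2] : (0:ℝ) ≤ ℓ - s)]
    simp
  rw [hL, hswap, hR]

theorem stmt_4 (ℓ : ℝ) (hℓ : 0 < ℓ) (g F : ℝ → ℝ)
    (hg_per : Function.Periodic g ℓ)
    (hg_int : IntervalIntegrable g MeasureTheory.volume 0 ℓ)
    (hF_per : Function.Periodic F ℓ)
    (hFg : ∀ a b : ℝ, a ≤ b → F b - F a = ∫ t in a..b, g t)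
    (x : ℝ) :
    F x - (1 / ℓ) * ∫ t in (0:ℝ)..ℓ, F t
      = -∫ y in (0:ℝ)..ℓ, g y * psiPer ℓ (x - y) := by
  have hgz : (∫ y in (0:ℝ)..ℓ, g y) = 0 := by
    have h := hFg 0 ℓ hℓ.le
    have h2 : F ℓ = F 0 := by simpa using hF_per 0
    rw [← h, h2, sub_self]
  set J := ∫ t in (0:ℝ)..ℓ, t * g t with hJ
  have hJint : IntervalIntegrable (fun t => t * g t) MeasureTheory.volume 0 ℓ :=
    hg_int.continuousOn_mul continuous_id.continuousOn
  -- average of F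
  have hFavg : (∫ t in (0:ℝ)..ℓ, F t) = ℓ * F 0 - J := by
    have hcong : Set.EqOn F (fun t => F 0 + ∫ s in (0:ℝ)..t, g s) (Set.uIcc 0 ℓ) := by
      intro t ht
      rw [Set.uIcc_of_le hℓ.le] at ht
      have h := hFg 0 t ht.1
      simp only
      linarith
    rw [intervalIntegral.integral_congr hcong]
    have hprim : IntervalIntegrable (fun t => ∫ s in (0:ℝ)..t, g s)
        MeasureTheory.volume 0 ℓ := by
      apply ContinuousOn.intervalIntegrable
      apply intervalIntegral.continuousOn_primitive_interval
      rw [Set.uIcc_of_le hℓ.le, integrableOn_Icc_iff_integrableOn_Ioc]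
      exact hg_int.1
    rw [intervalIntegral.integral_add intervalIntegrable_const hprim,
      intervalIntegral.integral_const, triangle_fubini ℓ hℓ g hg_int]
    have h3 : (∫ s in (0:ℝ)..ℓ, (ℓ - s) * g s)
        = ℓ * (∫ s in (0:ℝ)..ℓ, g s) - J := by
      rw [← intervalIntegral.integral_const_mul,
        ← intervalIntegral.integral_sub (hg_int.const_mul ℓ) hJint]
      apply intervalIntegral.integral_congr
      intro s _
      simp only
      ring
    rw [h3, hgz]
    simp only [smul_eq_mul, sub_zero, mul_zero, zero_sub]
    ring
  -- reduce to r ∈ [0, ℓ)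
  set n : ℤ := ⌊x / ℓ⌋ with hn
  set r : ℝ := x - n * ℓ with hrdef
  have hxl : x / ℓ * ℓ = x := div_mul_cancel₀ x hℓ.ne'
  have hr0 : 0 ≤ r := by
    have h1 : (n : ℝ) ≤ x / ℓ := Int.floor_le _
    have h2 := mul_le_mul_of_nonneg_right h1 hℓ.le
    rw [hxl] at h2
    linarith
  have hrℓ : r < ℓ := by
    have h1 : x / ℓ < n + 1 := Int.lt_floor_add_one _
    have h2 := mul_lt_mul_of_pos_right h1 hℓ
    rw [hxl] at h2
    have : ((n : ℝ) + 1) * ℓ = n * ℓ + ℓ := by ring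
    rw [this] at h2
    linarith
  have hFx : F x = F r := (hF_per.sub_int_mul_eq n).symm
  have hpsi : ∀ y : ℝ, psiPer ℓ (x - y) = psiPer ℓ (r - y) := by
    intro y
    unfold psiPer
    have h1 : (x - y) / ℓ = (r - y) / ℓ + n := by
      field_simp [hrdef]
      ring
    rw [h1, Int.fract_add_intCast]
  rw [hFx, hFavg]
  simp_rw [hpsi]
  -- now work with r
  have hc1 : Continuous (fun y : ℝ => (r - y) / ℓ - 1 / 2) := by continuity
  have hc2 : Continuous (fun y : ℝ => (r - y) / ℓ + 1 / 2) := by continuity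
  have hg1 : IntervalIntegrable g MeasureTheory.volume 0 r := by
    apply hg_int.mono_set
    rw [Set.uIcc_of_le hℓ.le, Set.uIcc_of_le hr0]
    exact Set.Icc_subset_Icc le_rfl hrℓ.le
  have hg2 : IntervalIntegrable g MeasureTheory.volume r ℓ := by
    apply hg_int.mono_set
    rw [Set.uIcc_of_le hℓ.le, Set.uIcc_of_le hrℓ.le]
    exact Set.Icc_subset_Icc hr0 le_rfl
  have hi1 : IntervalIntegrable (fun y => g y * ((r - y) / ℓ - 1 / 2))
      MeasureTheory.volume 0 r := hg1.mul_continuousOn hc1.continuousOn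
  have hi2 : IntervalIntegrable (fun y => g y * ((r - y) / ℓ + 1 / 2))
      MeasureTheory.volume r ℓ := hg2.mul_continuousOn hc2.continuousOn
  have heq1 : Set.EqOn (fun y => g y * psiPer ℓ (r - y))
      (fun y => g y * ((r - y) / ℓ - 1 / 2)) (Set.uIcc 0 r) := by
    intro y hy
    rw [Set.uIcc_of_le hr0] at hy
    simp only [psiPer]
    rw [Int.fract_eq_self.mpr ⟨div_nonneg (by linarith [hy.2]) hℓ.le,
      (div_lt_one hℓ).mpr (by linarith [hy.1])⟩]
  have heq2 : ∀ y ∈ Set.uIoc r ℓ, g y * psiPer ℓ (r - y)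
      = g y * ((r - y) / ℓ + 1 / 2) := by
    intro y hy
    rw [Set.uIoc_of_le hrℓ.le] at hy
    have h1 : Int.fract ((r - y) / ℓ) = (r - y) / ℓ + 1 := by
      rw [← Int.fract_add_one ((r - y) / ℓ)]
      apply Int.fract_eq_self.mpr
      constructor
      · have : -1 ≤ (r - y) / ℓ := by
          rw [le_div_iff₀ hℓ]
          linarith [hy.2]
        linarith
      · have : (r - y) / ℓ < 0 := div_neg_of_neg_of_pos (by linarith [hy.1]) hℓ
        linarith
    simp only [psiPer]
    rw [h1]
    ring
  have hI1 : IntervalIntegrable (fun y => g y * psiPer ℓ (r - y))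
      MeasureTheory.volume 0 r := by
    apply hi1.congr
    exact fun y hy => (heq1 (Set.uIoc_subset_uIcc hy)).symm
  have hI2 : IntervalIntegrable (fun y => g y * psiPer ℓ (r - y))
      MeasureTheory.volume r ℓ := by
    apply hi2.congr
    exact fun y hy => (heq2 y hy).symm
  have hsplit : (∫ y in (0:ℝ)..ℓ, g y * psiPer ℓ (r - y))
      = (∫ y in (0:ℝ)..r, g y * psiPer ℓ (r - y))
        + ∫ y in r..ℓ, g y * psiPer ℓ (r - y) :=
    (intervalIntegral.integral_add_adjacent_intervals hI1 hI2).symm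
  rw [hsplit, intervalIntegral.integral_congr heq1,
    intervalIntegral.integral_congr_ae (Filter.Eventually.of_forall heq2)]
  have h2' : (∫ y in r..ℓ, g y * ((r - y) / ℓ + 1 / 2))
      = (∫ y in r..ℓ, g y * ((r - y) / ℓ - 1 / 2)) + ∫ y in r..ℓ, g y := by
    rw [← intervalIntegral.integral_add (hg2.mul_continuousOn hc1.continuousOn) hg2]
    apply intervalIntegral.integral_congr
    intro y _
    simp only
    ring
  rw [h2']
  have hjoin : (∫ y in (0:ℝ)..r, g y * ((r - y) / ℓ - 1 / 2))
      + (∫ y in r..ℓ, g y * ((r - y) / ℓ - 1 / 2))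
      = ∫ y in (0:ℝ)..ℓ, g y * ((r - y) / ℓ - 1 / 2) :=
    intervalIntegral.integral_add_adjacent_intervals hi1
      (hg2.mul_continuousOn hc1.continuousOn)
  have hmain : (∫ y in (0:ℝ)..ℓ, g y * ((r - y) / ℓ - 1 / 2)) = -(1 / ℓ) * J := by
    have h4 : Set.EqOn (fun y => g y * ((r - y) / ℓ - 1 / 2))
        (fun y => (r / ℓ - 1 / 2) * g y - (1 / ℓ) * (y * g y)) (Set.uIcc 0 ℓ) := by
      intro y _
      simp only
      field_simp
      ring
    rw [intervalIntegral.integral_congr h4,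
      intervalIntegral.integral_sub (hg_int.const_mul _) (hJint.const_mul _),
      intervalIntegral.integral_const_mul, intervalIntegral.integral_const_mul, hgz]
    simp
    exact Or.inl hJ.symm
  have hrest : (∫ y in r..ℓ, g y) = F 0 - F r := by
    have h := hFg r ℓ hrℓ.le
    have h2 : F ℓ = F 0 := by simpa using hF_per 0
    rw [← h, h2]
  rw [show (∫ y in (0:ℝ)..r, g y * ((r - y) / ℓ - 1 / 2))
      + ((∫ y in r..ℓ, g y * ((r - y) / ℓ - 1 / 2)) + ∫ y in r..ℓ, g y)
      = ((∫ y in (0:ℝ)..r, g y * ((r - y) / ℓ - 1 / 2))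
      + (∫ y in r..ℓ, g y * ((r - y) / ℓ - 1 / 2))) + ∫ y in r..ℓ, g y by ring,
    hjoin, hmain, hrest]
  field_simp
  ring
end

section
/- The map z : B° → {a ∈ K : |a| < 1} is a bijection of the kernel of reduction B° with the open unit disc of K, sending the identity O to 0. -/
open WeierstrassCurve

variable {K : Type*} [NontriviallyNormedField K] [IsUltrametricDist K]
  [CompleteSpace K] [IsAlgClosed K]

/-- The "kernel of reduction" `B°`: the identity together with the affine points
with `|x| > 1`. -/
def kernelOfReduction (W : WeierstrassCurve.Affine K) : Set W.Point :=
  {P | P = 0 ∨ ∃ (x y : K) (h : W.Nonsingular x y), P = .some x y h ∧ 1 < ‖x‖}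

/-- The local parameter `z = -x/y` at the origin, defined to be `0` at the identity. -/
noncomputable def zmap (W : WeierstrassCurve.Affine K) : W.Point → K
  | .zero => 0
  | @WeierstrassCurve.Affine.Point.some _ _ _ x y _ => -x / y

private noncomputable def phiAux (W : WeierstrassCurve.Affine K) (z w : K) : K :=
  z ^ 3 + (W.a₁ * z + W.a₂ * z ^ 2) * w + (W.a₃ + W.a₄ * z) * w ^ 2 + W.a₆ * w ^ 3

private lemma norm_add_eq_left {a b : K} (h : ‖b‖ < ‖a‖) : ‖a + b‖ = ‖a‖ := by
  rw [IsUltrametricDist.norm_add_eq_max_of_norm_ne_norm h.ne']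
  exact max_eq_left h.le

private lemma phiAux_sub (W : WeierstrassCurve.Affine K) (z a b : K) :
    phiAux W z a - phiAux W z b =
      (a - b) * ((W.a₁ * z + W.a₂ * z ^ 2) +
        ((W.a₃ + W.a₄ * z) * (a + b) + W.a₆ * (a ^ 2 + a * b + b ^ 2))) := by
  simp only [phiAux]; ring

private lemma g_bound (W : WeierstrassCurve.Affine K)
    (ha₁ : ‖W.a₁‖ ≤ 1) (ha₂ : ‖W.a₂‖ ≤ 1) (ha₃ : ‖W.a₃‖ ≤ 1)
    (ha₄ : ‖W.a₄‖ ≤ 1) (ha₆ : ‖W.a₆‖ ≤ 1)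
    {z a b : K} {C : ℝ} (hzC : ‖z‖ ≤ C) (haC : ‖a‖ ≤ C) (hbC : ‖b‖ ≤ C) (hC1 : C ≤ 1) :
    ‖(W.a₁ * z + W.a₂ * z ^ 2) +
        ((W.a₃ + W.a₄ * z) * (a + b) + W.a₆ * (a ^ 2 + a * b + b ^ 2))‖ ≤ C := by
  have hC0 : (0:ℝ) ≤ C := le_trans (norm_nonneg z) hzC
  have key : ∀ u v : K, ‖u‖ ≤ C → ‖v‖ ≤ C → ‖u + v‖ ≤ C := fun u v hu hv =>
    le_trans (IsUltrametricDist.norm_add_le_max u v) (max_le hu hv)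
  have hsq : ∀ u v : K, ‖u‖ ≤ C → ‖v‖ ≤ C → ‖u * v‖ ≤ C := by
    intro u v hu hv
    rw [norm_mul]
    calc ‖u‖ * ‖v‖ ≤ C * C := by
          exact mul_le_mul hu hv (norm_nonneg v) hC0
      _ ≤ 1 * C := by nlinarith
      _ = C := one_mul C
  refine key _ _ (key _ _ ?_ ?_) (key _ _ ?_ ?_)
  · rw [norm_mul]
    calc ‖W.a₁‖ * ‖z‖ ≤ 1 * C := mul_le_mul ha₁ hzC (norm_nonneg z) zero_le_one
      _ = C := one_mul C
  · rw [norm_mul, norm_pow]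
    calc ‖W.a₂‖ * ‖z‖ ^ 2 ≤ 1 * C := by nlinarith [norm_nonneg W.a₂, norm_nonneg z]
      _ = C := one_mul C
  · rw [norm_mul]
    have h1 : ‖W.a₃ + W.a₄ * z‖ ≤ 1 := by
      refine le_trans (IsUltrametricDist.norm_add_le_max _ _) (max_le ha₃ ?_)
      rw [norm_mul]
      calc ‖W.a₄‖ * ‖z‖ ≤ 1 * 1 := by
            exact mul_le_mul ha₄ (le_trans hzC hC1) (norm_nonneg z) zero_le_one
        _ = 1 := one_mul 1
    have h2 : ‖a + b‖ ≤ C :=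
      le_trans (IsUltrametricDist.norm_add_le_max a b) (max_le haC hbC)
    calc ‖W.a₃ + W.a₄ * z‖ * ‖a + b‖ ≤ 1 * C :=
          mul_le_mul h1 h2 (norm_nonneg _) zero_le_one
      _ = C := one_mul C
  · rw [norm_mul]
    have h2 : ‖a ^ 2 + a * b + b ^ 2‖ ≤ C := by
      refine key _ _ (key _ _ ?_ (hsq a b haC hbC)) ?_
      · rw [sq]; exact hsq a a haC haC
      · rw [sq]; exact hsq b b hbC hbC
    calc ‖W.a₆‖ * ‖a ^ 2 + a * b + b ^ 2‖ ≤ 1 * C :=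
          mul_le_mul ha₆ h2 (norm_nonneg _) zero_le_one
      _ = C := one_mul C

private lemma phiAux_uniq (W : WeierstrassCurve.Affine K)
    (ha₁ : ‖W.a₁‖ ≤ 1) (ha₂ : ‖W.a₂‖ ≤ 1) (ha₃ : ‖W.a₃‖ ≤ 1)
    (ha₄ : ‖W.a₄‖ ≤ 1) (ha₆ : ‖W.a₆‖ ≤ 1)
    {z a b : K} (hz : ‖z‖ < 1) (ha : ‖a‖ < 1) (hb : ‖b‖ < 1)
    (hfa : phiAux W z a = a) (hfb : phiAux W z b = b) : a = b := by
  by_contra hne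
  set C : ℝ := max ‖z‖ (max ‖a‖ ‖b‖) with hC
  have hC1 : C < 1 := by
    simp only [hC, max_lt_iff]
    exact ⟨hz, ha, hb⟩
  have hg := g_bound W ha₁ ha₂ ha₃ ha₄ ha₆ (z := z) (a := a) (b := b) (C := C)
    (le_max_left _ _) (le_trans (le_max_left _ _) (le_max_right _ _))
    (le_trans (le_max_right _ _) (le_max_right _ _)) hC1.le
  have h1 : a - b = (a - b) * ((W.a₁ * z + W.a₂ * z ^ 2) +
      ((W.a₃ + W.a₄ * z) * (a + b) + W.a₆ * (a ^ 2 + a * b + b ^ 2))) := by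
    conv_lhs => rw [← hfa, ← hfb]
    exact phiAux_sub W z a b
  have h2 : ‖a - b‖ ≤ ‖a - b‖ * C := by
    conv_lhs => rw [h1]
    rw [norm_mul]
    exact mul_le_mul_of_nonneg_left hg (norm_nonneg _)
  have h3 : 0 < ‖a - b‖ := norm_pos_iff.mpr (sub_ne_zero.mpr hne)
  nlinarith

private lemma phiAux_exists (W : WeierstrassCurve.Affine K)
    (ha₁ : ‖W.a₁‖ ≤ 1) (ha₂ : ‖W.a₂‖ ≤ 1) (ha₃ : ‖W.a₃‖ ≤ 1)
    (ha₄ : ‖W.a₄‖ ≤ 1) (ha₆ : ‖W.a₆‖ ≤ 1)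
    {z : K} (hz : ‖z‖ < 1) : ∃ w : K, ‖w‖ ≤ ‖z‖ ^ 3 ∧ phiAux W z w = w := by
  set r : ℝ := ‖z‖ ^ 3 with hr
  have hr0 : 0 ≤ r := by positivity
  have hr1 : r ≤ ‖z‖ := by
    rw [hr]
    have := pow_le_pow_of_le_one (norm_nonneg z) hz.le (show 1 ≤ 3 by norm_num)
    simpa using this
  set s : Set K := Metric.closedBall (0:K) r with hs
  have hmem : ∀ w : K, w ∈ s ↔ ‖w‖ ≤ r := by
    intro w; rw [hs, Metric.mem_closedBall, dist_zero_right]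
  have hmaps : ∀ w : K, w ∈ s → phiAux W z w ∈ s := by
    intro w hw
    rw [hmem] at hw ⊢
    have hwz : ‖w‖ ≤ ‖z‖ := le_trans hw hr1
    have hw1 : ‖w‖ ≤ 1 := le_trans hwz hz.le
    have key : ∀ u v : K, ‖u‖ ≤ r → ‖v‖ ≤ r → ‖u + v‖ ≤ r := fun u v hu hv =>
      le_trans (IsUltrametricDist.norm_add_le_max u v) (max_le hu hv)
    refine key _ _ (key _ _ (key _ _ ?_ ?_) ?_) ?_
    · rw [norm_pow]
    · rw [norm_mul]
      have h1 : ‖W.a₁ * z + W.a₂ * z ^ 2‖ ≤ 1 := by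
        refine le_trans (IsUltrametricDist.norm_add_le_max _ _) (max_le ?_ ?_)
        · rw [norm_mul]; nlinarith [norm_nonneg W.a₁, norm_nonneg z]
        · rw [norm_mul, norm_pow]; nlinarith [norm_nonneg W.a₂, norm_nonneg z]
      nlinarith [norm_nonneg (W.a₁ * z + W.a₂ * z ^ 2), norm_nonneg w]
    · rw [norm_mul, norm_pow]
      have h1 : ‖W.a₃ + W.a₄ * z‖ ≤ 1 := by
        refine le_trans (IsUltrametricDist.norm_add_le_max _ _) (max_le ha₃ ?_)
        rw [norm_mul]; nlinarith [norm_nonneg W.a₄, norm_nonneg z]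
      nlinarith [norm_nonneg (W.a₃ + W.a₄ * z), norm_nonneg w]
    · rw [norm_mul, norm_pow]
      have hw3 : ‖w‖ ^ 3 ≤ ‖w‖ := by
        have := pow_le_pow_of_le_one (norm_nonneg w) hw1 (show 1 ≤ 3 by norm_num)
        simpa using this
      nlinarith [norm_nonneg W.a₆, norm_nonneg w]
  have hclosed : IsClosed s := Metric.isClosed_closedBall
  haveI : CompleteSpace s := hclosed.completeSpace_coe
  haveI : Nonempty s := ⟨⟨0, by rw [hmem]; simpa using hr0⟩⟩
  set f : s → s := fun w => ⟨phiAux W z w.1, hmaps w.1 w.2⟩ with hf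
  have hcontr : ContractingWith ‖z‖₊ f := by
    constructor
    · exact_mod_cast hz
    · refine LipschitzWith.of_dist_le_mul fun a b => ?_
      have hda : dist (f a) (f b) = ‖phiAux W z a.1 - phiAux W z b.1‖ := by
        rw [Subtype.dist_eq, dist_eq_norm]
      have hdb : dist a b = ‖a.1 - b.1‖ := by rw [Subtype.dist_eq, dist_eq_norm]
      rw [hda, hdb, phiAux_sub, norm_mul]
      have hga : ‖(a:K)‖ ≤ ‖z‖ := le_trans ((hmem _).mp a.2) hr1
      have hgb : ‖(b:K)‖ ≤ ‖z‖ := le_trans ((hmem _).mp b.2) hr1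
      have hg := g_bound W ha₁ ha₂ ha₃ ha₄ ha₆ (z := z) (a := a.1) (b := b.1)
        (C := ‖z‖) le_rfl hga hgb hz.le
      calc ‖(a:K) - b‖ * ‖_‖ ≤ ‖(a:K) - b‖ * ‖z‖ :=
            mul_le_mul_of_nonneg_left hg (norm_nonneg _)
        _ = ↑‖z‖₊ * ‖(a:K) - b‖ := by rw [coe_nnnorm, mul_comm]
  obtain ⟨w, hwfix⟩ := hcontr.exists_fixedPoint (Nonempty.some ‹_›)
    (edist_ne_top _ _)
  exact ⟨w.1, (hmem _).mp w.2, congrArg Subtype.val hwfix.1⟩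

private lemma point_facts (W : WeierstrassCurve.Affine K)
    (ha₁ : ‖W.a₁‖ ≤ 1) (ha₂ : ‖W.a₂‖ ≤ 1) (ha₃ : ‖W.a₃‖ ≤ 1)
    (ha₄ : ‖W.a₄‖ ≤ 1) (ha₆ : ‖W.a₆‖ ≤ 1) {x y : K}
    (heq : y ^ 2 + W.a₁ * x * y + W.a₃ * y = x ^ 3 + W.a₂ * x ^ 2 + W.a₄ * x + W.a₆)
    (hx : 1 < ‖x‖) : ‖x‖ < ‖y‖ := by
  have hx0 : (0:ℝ) < ‖x‖ := lt_trans zero_lt_one hx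
  have hx1 : ‖x‖ < ‖x‖ ^ 2 := by nlinarith [mul_pos hx0 (sub_pos.mpr hx)]
  have hx2 : ‖x‖ ^ 2 < ‖x‖ ^ 3 := by nlinarith [mul_pos (mul_pos hx0 hx0) (sub_pos.mpr hx)]
  have hRHS : ‖x ^ 3 + W.a₂ * x ^ 2 + W.a₄ * x + W.a₆‖ = ‖x‖ ^ 3 := by
    have hgroup : x ^ 3 + W.a₂ * x ^ 2 + W.a₄ * x + W.a₆
        = x ^ 3 + (W.a₂ * x ^ 2 + (W.a₄ * x + W.a₆)) := by ring
    rw [hgroup, norm_add_eq_left, norm_pow]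
    have h1 : ‖W.a₂ * x ^ 2‖ < ‖x ^ 3‖ := by
      rw [norm_mul, norm_pow, norm_pow]
      exact lt_of_le_of_lt (mul_le_of_le_one_left (by positivity) ha₂) hx2
    have h2 : ‖W.a₄ * x‖ < ‖x ^ 3‖ := by
      rw [norm_mul, norm_pow]
      exact lt_of_le_of_lt (mul_le_of_le_one_left hx0.le ha₄) (hx1.trans hx2)
    have h3 : ‖W.a₆‖ < ‖x ^ 3‖ := by
      rw [norm_pow]
      exact lt_of_le_of_lt ha₆ (hx.trans (hx1.trans hx2))
    refine lt_of_le_of_lt (IsUltrametricDist.norm_add_le_max _ _) (max_lt h1 ?_)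
    exact lt_of_le_of_lt (IsUltrametricDist.norm_add_le_max _ _) (max_lt h2 h3)
  by_contra hcon
  push_neg at hcon
  have hLHS : ‖y ^ 2 + W.a₁ * x * y + W.a₃ * y‖ ≤ ‖x‖ ^ 2 := by
    refine le_trans (IsUltrametricDist.norm_add_le_max _ _) (max_le ?_ ?_)
    · refine le_trans (IsUltrametricDist.norm_add_le_max _ _) (max_le ?_ ?_)
      · rw [norm_pow]
        nlinarith [norm_nonneg y]
      · rw [norm_mul, norm_mul]
        nlinarith [norm_nonneg W.a₁, norm_nonneg y, norm_nonneg x,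
          mul_le_mul_of_nonneg_left hcon hx0.le,
          mul_le_mul_of_nonneg_right ha₁ (mul_nonneg (norm_nonneg x) (norm_nonneg y))]
    · rw [norm_mul]
      nlinarith [norm_nonneg W.a₃, norm_nonneg y]
  rw [heq, hRHS] at hLHS
  linarith [hx2]

private lemma point_zw (W : WeierstrassCurve.Affine K) {x y : K} (hy : y ≠ 0)
    (heq : y ^ 2 + W.a₁ * x * y + W.a₃ * y = x ^ 3 + W.a₂ * x ^ 2 + W.a₄ * x + W.a₆) :
    phiAux W (-x / y) (-1 / y) = -1 / y := by
  have key : (phiAux W (-x / y) (-1 / y) - (-1 / y)) * y ^ 3 =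
      (y ^ 2 + W.a₁ * x * y + W.a₃ * y) - (x ^ 3 + W.a₂ * x ^ 2 + W.a₄ * x + W.a₆) := by
    have hu : y * y⁻¹ = 1 := mul_inv_cancel₀ hy
    simp only [phiAux]
    linear_combination ((-x ^ 3 - W.a₂ * x ^ 2 - W.a₄ * x - W.a₆) * (y⁻¹ ^ 2 * y ^ 2 + y⁻¹ * y + 1)
      + (W.a₁ * x + W.a₃) * y * (y⁻¹ * y + 1) + y ^ 2) * hu
  rw [heq, sub_self] at key
  rcases mul_eq_zero.mp key with h | h
  · exact sub_eq_zero.mp h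
  · exact absurd ((pow_eq_zero_iff (by norm_num)).mp h) hy

theorem stmt_5 (W : WeierstrassCurve.Affine K) (hΔ : W.Δ ≠ 0)
    (ha₁ : ‖W.a₁‖ ≤ 1) (ha₂ : ‖W.a₂‖ ≤ 1) (ha₃ : ‖W.a₃‖ ≤ 1)
    (ha₄ : ‖W.a₄‖ ≤ 1) (ha₆ : ‖W.a₆‖ ≤ 1) :
    Set.BijOn (zmap W) (kernelOfReduction W) {a : K | ‖a‖ < 1} ∧
      zmap W 0 = 0 := by
  have hfacts : ∀ {x y : K} (h : W.Nonsingular x y), 1 < ‖x‖ →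
      y ≠ 0 ∧ ‖-x / y‖ < 1 ∧ ‖-1 / y‖ < 1 ∧ phiAux W (-x / y) (-1 / y) = -1 / y := by
    intro x y h hx
    have heq := (W.equation_iff x y).mp ((W.nonsingular_iff x y).mp h).1
    have hxy := point_facts W ha₁ ha₂ ha₃ ha₄ ha₆ heq hx
    have hy1 : 1 < ‖y‖ := lt_trans hx hxy
    have hy0 : y ≠ 0 := by
      intro hy0; rw [hy0, norm_zero] at hy1; linarith
    have hypos : (0:ℝ) < ‖y‖ := lt_trans zero_lt_one hy1
    refine ⟨hy0, ?_, ?_, point_zw W hy0 heq⟩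
    · rw [norm_div, norm_neg, div_lt_one hypos]; exact hxy
    · rw [norm_div, norm_neg, norm_one, div_lt_one hypos]; exact hy1
  refine ⟨⟨?_, ?_, ?_⟩, rfl⟩
  · -- MapsTo
    rintro P (rfl | ⟨x, y, h, rfl, hx⟩)
    · show ‖zmap W 0‖ < 1
      simp [zmap]
    · exact (hfacts h hx).2.1
  · -- InjOn
    rintro P (rfl | ⟨x₁, y₁, h₁, rfl, hx₁⟩) Q (rfl | ⟨x₂, y₂, h₂, rfl, hx₂⟩) hzeq
    · rfl
    · exfalso
      obtain ⟨hy0, -, -, -⟩ := hfacts h₂ hx₂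
      have : (0:K) = -x₂ / y₂ := hzeq
      rw [eq_comm, div_eq_zero_iff, neg_eq_zero] at this
      rcases this with rfl | rfl
      · rw [norm_zero] at hx₂; linarith
      · exact hy0 rfl
    · exfalso
      obtain ⟨hy0, -, -, -⟩ := hfacts h₁ hx₁
      have : -x₁ / y₁ = (0:K) := hzeq
      rw [div_eq_zero_iff, neg_eq_zero] at this
      rcases this with rfl | rfl
      · rw [norm_zero] at hx₁; linarith
      · exact hy0 rfl
    · obtain ⟨hy₁, hz₁, hw₁, hfix₁⟩ := hfacts h₁ hx₁
      obtain ⟨hy₂, hz₂, hw₂, hfix₂⟩ := hfacts h₂ hx₂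
      have hzz : -x₁ / y₁ = -x₂ / y₂ := hzeq
      rw [hzz] at hfix₁ hz₁
      have hww : -1 / y₁ = -1 / y₂ :=
        phiAux_uniq W ha₁ ha₂ ha₃ ha₄ ha₆ hz₂ hw₁ hw₂ hfix₁ hfix₂
      have hyy : y₁ = y₂ := by
        field_simp at hww
        exact neg_inj.mp hww.symm
      have hxx : x₁ = x₂ := by
        rw [hyy] at hzz
        field_simp at hzz
        exact neg_inj.mp hzz
      subst hyy hxx
      rfl
  · -- SurjOn
    rintro z hz
    have hz1 : ‖z‖ < 1 := hz
    by_cases hz0 : z = 0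
    · exact ⟨0, Or.inl rfl, by simp [zmap, hz0]⟩
    · obtain ⟨w, hwle, hwfix⟩ := phiAux_exists W ha₁ ha₂ ha₃ ha₄ ha₆ hz1
      have hzpos : (0:ℝ) < ‖z‖ := norm_pos_iff.mpr hz0
      have hw0 : w ≠ 0 := by
        rintro rfl
        simp only [phiAux] at hwfix
        ring_nf at hwfix
        simp at hwfix
        exact hz0 hwfix
      have hz31 : ‖z‖ ^ 3 < 1 := by
        nlinarith [mul_pos hzpos (sub_pos.mpr hz1), mul_pos (mul_pos hzpos hzpos) (sub_pos.mpr hz1)]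
      have hz3pos : (0:ℝ) < ‖z‖ ^ 3 := by positivity
      have hw2 : ‖w‖ ^ 2 ≤ ‖z‖ ^ 3 * ‖z‖ ^ 3 := by
        rw [sq]
        exact mul_le_mul hwle hwle (norm_nonneg w) (by positivity)
      have hweq : ‖w‖ = ‖z‖ ^ 3 := by
        have hsplit : w = z ^ 3 + ((W.a₁ * z + W.a₂ * z ^ 2) * w +
            ((W.a₃ + W.a₄ * z) * w ^ 2 + W.a₆ * w ^ 3)) := by
          conv_lhs => rw [← hwfix]
          simp only [phiAux]; ring
        have hrest : ‖(W.a₁ * z + W.a₂ * z ^ 2) * w +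
            ((W.a₃ + W.a₄ * z) * w ^ 2 + W.a₆ * w ^ 3)‖ < ‖z ^ 3‖ := by
          rw [norm_pow]
          have hz3 : (0:ℝ) < ‖z‖ ^ 3 := by positivity
          have h1 : ‖(W.a₁ * z + W.a₂ * z ^ 2) * w‖ < ‖z‖ ^ 3 := by
            rw [norm_mul]
            have hc : ‖W.a₁ * z + W.a₂ * z ^ 2‖ ≤ ‖z‖ := by
              refine le_trans (IsUltrametricDist.norm_add_le_max _ _) (max_le ?_ ?_)
              · rw [norm_mul]; nlinarith [norm_nonneg W.a₁, norm_nonneg z]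
              · rw [norm_mul, norm_pow]; nlinarith [norm_nonneg W.a₂]
            nlinarith [norm_nonneg w, norm_nonneg (W.a₁ * z + W.a₂ * z ^ 2)]
          have h2 : ‖(W.a₃ + W.a₄ * z) * w ^ 2‖ < ‖z‖ ^ 3 := by
            rw [norm_mul, norm_pow]
            have hc : ‖W.a₃ + W.a₄ * z‖ ≤ 1 := by
              refine le_trans (IsUltrametricDist.norm_add_le_max _ _) (max_le ha₃ ?_)
              rw [norm_mul]; nlinarith [norm_nonneg W.a₄]
            calc ‖W.a₃ + W.a₄ * z‖ * ‖w‖ ^ 2 ≤ 1 * (‖z‖ ^ 3 * ‖z‖ ^ 3) := by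
                  exact mul_le_mul hc hw2 (by positivity) zero_le_one
              _ = ‖z‖ ^ 3 * ‖z‖ ^ 3 := one_mul _
              _ < 1 * ‖z‖ ^ 3 := by
                  exact mul_lt_mul_of_pos_right hz31 hz3pos
              _ = ‖z‖ ^ 3 := one_mul _
          have h3 : ‖W.a₆ * w ^ 3‖ < ‖z‖ ^ 3 := by
            rw [norm_mul, norm_pow]
            have hw3 : ‖w‖ ^ 3 ≤ (‖z‖ ^ 3 * ‖z‖ ^ 3) * ‖z‖ ^ 3 := by
              calc ‖w‖ ^ 3 = ‖w‖ ^ 2 * ‖w‖ := by ring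
                _ ≤ (‖z‖ ^ 3 * ‖z‖ ^ 3) * ‖z‖ ^ 3 :=
                    mul_le_mul hw2 hwle (norm_nonneg w) (by positivity)
            calc ‖W.a₆‖ * ‖w‖ ^ 3 ≤ 1 * ((‖z‖ ^ 3 * ‖z‖ ^ 3) * ‖z‖ ^ 3) :=
                  mul_le_mul ha₆ hw3 (by positivity) zero_le_one
              _ = (‖z‖ ^ 3 * ‖z‖ ^ 3) * ‖z‖ ^ 3 := one_mul _
              _ < 1 * ‖z‖ ^ 3 := by nlinarith
              _ = ‖z‖ ^ 3 := one_mul _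
          refine lt_of_le_of_lt (IsUltrametricDist.norm_add_le_max _ _) (max_lt h1 ?_)
          exact lt_of_le_of_lt (IsUltrametricDist.norm_add_le_max _ _) (max_lt h2 h3)
        rw [hsplit, norm_add_eq_left hrest, norm_pow]
      set x : K := z / w with hxdef
      set y : K := -1 / w with hydef
      have hy0 : y ≠ 0 := by
        rw [hydef]
        simp [hw0]
      have hx : 1 < ‖x‖ := by
        rw [hxdef, norm_div, hweq]
        rw [lt_div_iff₀ (by positivity)]
        nlinarith [mul_pos hzpos (sub_pos.mpr hz1), mul_pos (mul_pos hzpos hzpos) (sub_pos.mpr hz1)]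
      have heq : W.Equation x y := by
        rw [W.equation_iff]
        have key2 : (y ^ 2 + W.a₁ * x * y + W.a₃ * y
            - (x ^ 3 + W.a₂ * x ^ 2 + W.a₄ * x + W.a₆)) * w ^ 3
            = w - phiAux W z w := by
          have hu : w * w⁻¹ = 1 := mul_inv_cancel₀ hw0
          rw [hxdef, hydef]
          simp only [phiAux]
          linear_combination ((1 - W.a₁ * z - W.a₂ * z ^ 2) * w * (w⁻¹ * w + 1)
            + (-W.a₃ - W.a₄ * z) * w ^ 2
            + (-z ^ 3) * (w⁻¹ ^ 2 * w ^ 2 + w⁻¹ * w + 1)) * hu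
        rw [hwfix, sub_self] at key2
        rcases mul_eq_zero.mp key2 with h | h
        · exact sub_eq_zero.mp h
        · exact absurd ((pow_eq_zero_iff (by norm_num)).mp h) hw0
      have h := (WeierstrassCurve.Affine.equation_iff_nonsingular_of_Δ_ne_zero (W := W) hΔ).mp heq
      refine ⟨.some x y h, Or.inr ⟨x, y, h, rfl, hx⟩, ?_⟩
      show -x / y = z
      rw [hxdef, hydef]
      field_simp
end
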